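/- Let H be a locally tame strongly primary monoid. Then the catenary degree satisfies c(H) ≤ 1 + Λ(H) and c(H) ≤ max{M(u) − 1, t(H, u)} for every atom u; in particular, the set of distances Δ(H) is finite. -/

import Mathlib

open Pointwise

variable {M : Type*} [CancelCommMonoid M]

/-- The set of factorizations of `a` (in the associated reduced monoid):
multisets of irreducible associates whose product is the class of `a`. -/
def Zfac (a : M) : Set (Multiset (Associates M)) :=
  {z | (∀ u ∈ z, Irreducible u) ∧ z.prod = Associates.mk a}

/-- Distance between two factorizations. -/
noncomputable def fdist (z z' : Multiset (Associates M)) : ℕ :=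
  letI := Classical.decEq (Associates M)
  max (z - z').card (z' - z).card

/-- The set of lengths of `a`. -/
def Lset (a : M) : Set ℕ := {k | ∃ z ∈ Zfac a, Multiset.card z = k}

/-- `N` is a bound for the catenary degree of `M`: any two factorizations of any
element can be concatenated by an `N`-chain of factorizations. -/
def CatenaryBound (M : Type*) [CancelCommMonoid M] (N : ℕ) : Prop :=
  ∀ a : M, ∀ z ∈ Zfac a, ∀ z' ∈ Zfac a,
    ∃ (k : ℕ) (c : Fin (k + 1) → Multiset (Associates M)),
      c 0 = z ∧ c (Fin.last k) = z' ∧ (∀ i, c i ∈ Zfac a) ∧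
      ∀ i : Fin k, fdist (c i.castSucc) (c i.succ) ≤ N

/-- `N` is a bound for the local tame degree `t(H, u)` of the atom `u`. -/
def TameBound (u : Associates M) (N : ℕ) : Prop :=
  ∀ a : M, (∃ z ∈ Zfac a, u ∈ z) →
    ∀ z ∈ Zfac a, ∃ z' ∈ Zfac a, u ∈ z' ∧ fdist z z' ≤ N

/-- The set of distances Δ(M): successive distances occurring in sets of
lengths. -/
def DeltaSet (M : Type*) [CancelCommMonoid M] : Set ℕ :=
  {d | 0 < d ∧ ∃ a : M, ∃ k, k ∈ Lset a ∧ k + d ∈ Lset a ∧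
    ∀ j, k < j → j < k + d → j ∉ Lset a}

lemma mk_prod (l : Multiset M) : (l.map Associates.mk).prod = Associates.mk l.prod := by
  induction l using Multiset.induction with
  | empty => simp
  | cons a s ih => simp [ih, Associates.mk_mul_mk]

lemma irr_mk {a : M} : Irreducible (Associates.mk a) ↔ Irreducible a := by
  constructor
  · rintro ⟨h1, h2⟩
    refine ⟨fun h => h1 (Associates.isUnit_mk.mpr h), ?_⟩
    rintro x y rfl
    rcases h2 (show Associates.mk (x * y) = Associates.mk x * Associates.mk y by rw [Associates.mk_mul_mk]) with h | h
    · exact Or.inl (Associates.isUnit_mk.mp h)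
    · exact Or.inr (Associates.isUnit_mk.mp h)
  · rintro ⟨h1, h2⟩
    refine ⟨fun h => h1 (Associates.isUnit_mk.mp h), ?_⟩
    intro p q hpq
    obtain ⟨x, rfl⟩ := Associates.mk_surjective p
    obtain ⟨y, rfl⟩ := Associates.mk_surjective q
    rw [Associates.mk_mul_mk, Associates.mk_eq_mk_iff_associated] at hpq
    obtain ⟨e, he⟩ := hpq
    have ha : a = x * y * ↑e⁻¹ := by rw [← he, Units.mul_inv_cancel_right]
    rcases h2 (show a = x * (y * ↑e⁻¹) by rw [ha, mul_assoc]) with h | h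
    · exact Or.inl (Associates.isUnit_mk.mpr h)
    · exact Or.inr (Associates.isUnit_mk.mpr (isUnit_of_mul_isUnit_left h))

lemma assoc_cancel (x : Associates M) : ∀ {y z : Associates M}, x * y = x * z → y = z := by
  obtain ⟨a, rfl⟩ := Associates.mk_surjective x
  intro y z h
  obtain ⟨b, rfl⟩ := Associates.mk_surjective y
  obtain ⟨c, rfl⟩ := Associates.mk_surjective z
  rw [Associates.mk_mul_mk, Associates.mk_mul_mk, Associates.mk_eq_mk_iff_associated] at h
  obtain ⟨e, he⟩ := h
  rw [mul_assoc] at he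
  have : b * e = c := mul_left_cancel he
  exact Associates.mk_eq_mk_iff_associated.mpr ⟨e, this⟩

lemma exists_le_card {α : Type*} {z : Multiset α} {n : ℕ} (h : n ≤ Multiset.card z) :
    ∃ s ≤ z, Multiset.card s = n := by
  refine ⟨(z.toList.take n : List α), ?_, ?_⟩
  · have h1 : (z.toList.take n).Subperm z.toList := (List.take_sublist n z.toList).subperm
    have := Multiset.coe_le.mpr h1
    simpa using this
  · simp only [Multiset.coe_card, List.length_take]
    rw [Multiset.length_toList] at *
    omega

lemma prod_mem_pow {S : Set M} {l : Multiset M} (h : ∀ x ∈ l, x ∈ S) :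
    l.prod ∈ S ^ (Multiset.card l) := by
  induction l using Multiset.induction with
  | empty => simp [Set.mem_one]
  | cons a s ih =>
    simp only [Multiset.prod_cons, Multiset.card_cons, pow_succ']
    exact Set.mul_mem_mul (h a (Multiset.mem_cons_self a s)) (ih fun x hx => h x (Multiset.mem_cons_of_mem hx))

lemma exists_lift (z : Multiset (Associates M)) : ∃ l : Multiset M, l.map Associates.mk = z := by
  induction z using Multiset.induction with
  | empty => exact ⟨0, rfl⟩
  | cons a s ih =>
    obtain ⟨l, hl⟩ := ih
    obtain ⟨x, rfl⟩ := Associates.mk_surjective a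
    exact ⟨x ::ₘ l, by simp [hl]⟩

lemma bounded_decomp {a : M} {n : ℕ}
    (hsub : {b : M | ¬IsUnit b} ^ n ⊆ {c : M | a ∣ c})
    {l : Multiset M} (hl : ∀ x ∈ l, ¬IsUnit x) (hassoc : Associated l.prod a) :
    Multiset.card l ≤ n := by
  classical
  by_contra hn
  push_neg at hn
  obtain ⟨s, hs, hcs⟩ := exists_le_card (le_of_lt hn)
  have hmem : a ∣ s.prod := by
    refine hsub ?_
    rw [← hcs]
    exact prod_mem_pow (fun x hx => hl x (Multiset.mem_of_le hs hx))
  obtain ⟨d, hd⟩ := hmem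
  obtain ⟨e, he⟩ := hassoc
  have hsplit : s.prod * (l - s).prod = l.prod := by
    rw [← Multiset.prod_add, add_tsub_cancel_of_le hs]
  have key : a * 1 = a * (d * (l - s).prod * ↑e) := by
    rw [mul_one, ← mul_assoc, ← mul_assoc, ← hd, hsplit, he]
  have h1 : (1 : M) = d * (l - s).prod * ↑e := mul_left_cancel key
  have hunit : IsUnit ((l - s).prod) := by
    refine isUnit_of_mul_isUnit_left (y := ↑e) ?_
    refine isUnit_of_mul_isUnit_right (x := d) ?_
    rw [← mul_assoc, ← h1]; exact isUnit_one
  have hne : (l - s) ≠ 0 := by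
    intro h0
    have hcard := Multiset.card_sub hs
    rw [h0, hcs] at hcard
    simp at hcard
    omega
  obtain ⟨x, hx⟩ := Multiset.exists_mem_of_ne_zero hne
  exact hl x (Multiset.mem_of_le (Multiset.sub_le_self l s) hx)
    (isUnit_of_dvd_unit (Multiset.dvd_prod hx) hunit)

lemma exists_atomic_decomp
    (hsp : ∀ a : M, ¬IsUnit a → ∃ n : ℕ, 0 < n ∧
      {b : M | ¬IsUnit b} ^ n ⊆ {c : M | a ∣ c})
    {c : M} (hc : ¬IsUnit c) :
    ∃ l : Multiset M, (∀ x ∈ l, Irreducible x) ∧ l.prod = c := by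
  classical
  set S : Set ℕ := {k | ∃ l : Multiset M, (∀ x ∈ l, ¬IsUnit x) ∧ l.prod = c ∧ Multiset.card l = k} with hS
  have hne : S.Nonempty := ⟨1, {c}, by simpa using hc, by simp, by simp⟩
  obtain ⟨n, -, hsub⟩ := hsp c hc
  have hbdd : BddAbove S := by
    refine ⟨n, fun k hk => ?_⟩
    obtain ⟨l, hl1, hl2, hl3⟩ := hk
    rw [← hl3]
    exact bounded_decomp hsub hl1 (hl2 ▸ Associated.refl _)
  obtain ⟨l, hl1, hl2, hl3⟩ := Nat.sSup_mem hne hbdd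
  refine ⟨l, fun x hx => ?_, hl2⟩
  refine ⟨hl1 x hx, ?_⟩
  intro y z hyz
  by_contra hcon
  push_neg at hcon
  obtain ⟨hy, hz⟩ := hcon
  have hmax : sSup S + 1 ∈ S := by
    refine ⟨y ::ₘ z ::ₘ l.erase x, ?_, ?_, ?_⟩
    · intro w hw
      rcases Multiset.mem_cons.mp hw with rfl | hw
      · exact hy
      rcases Multiset.mem_cons.mp hw with rfl | hw
      · exact hz
      · exact hl1 w (Multiset.mem_of_mem_erase hw)
    · rw [Multiset.prod_cons, Multiset.prod_cons, ← mul_assoc, ← hyz, ← Multiset.prod_cons,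
        Multiset.cons_erase hx]
      exact hl2
    · rw [Multiset.card_cons, Multiset.card_cons, Multiset.card_erase_of_mem hx, hl3]
      have h1 : 1 ≤ sSup S := le_csSup hbdd ⟨{c}, by simpa using hc, by simp, by simp⟩
      simp only [Nat.pred_eq_sub_one]
      omega
  have := le_csSup hbdd hmax
  omega


lemma zfac_nonempty
    (hsp : ∀ a : M, ¬IsUnit a → ∃ n : ℕ, 0 < n ∧
      {b : M | ¬IsUnit b} ^ n ⊆ {c : M | a ∣ c})
    (c : M) : (Zfac c).Nonempty := by
  by_cases hc : IsUnit c
  · exact ⟨0, by simp, by simpa using (Associates.mk_eq_one.mpr hc).symm⟩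
  · obtain ⟨l, hl1, hl2⟩ := exists_atomic_decomp hsp hc
    refine ⟨l.map Associates.mk, ?_, by rw [mk_prod, hl2]⟩
    intro u hu
    obtain ⟨x, hx, rfl⟩ := Multiset.mem_map.mp hu
    exact irr_mk.mpr (hl1 x hx)

lemma zfac_elems_lift {a : M} {z : Multiset (Associates M)} (hz : z ∈ Zfac a) :
    ∃ l : Multiset M, l.map Associates.mk = z ∧ (∀ x ∈ l, Irreducible x) ∧
      Associated l.prod a := by
  obtain ⟨l, hl⟩ := exists_lift z
  refine ⟨l, hl, fun x hx => ?_, ?_⟩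
  · exact irr_mk.mp (hz.1 _ (hl ▸ Multiset.mem_map_of_mem _ hx))
  · rw [← Associates.mk_eq_mk_iff_associated, ← mk_prod, hl, hz.2]

lemma zfac_card_bound
    (hsp : ∀ a : M, ¬IsUnit a → ∃ n : ℕ, 0 < n ∧
      {b : M | ¬IsUnit b} ^ n ⊆ {c : M | a ∣ c})
    (a : M) : ∃ n : ℕ, ∀ z ∈ Zfac a, Multiset.card z ≤ n := by
  by_cases ha : IsUnit a
  · refine ⟨0, fun z hz => ?_⟩
    have hz1 : z.prod = 1 := by rw [hz.2, Associates.mk_eq_one.mpr ha]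
    have : z = 0 := by
      rw [Multiset.eq_zero_iff_forall_notMem]
      intro x hx
      exact (hz.1 x hx).not_isUnit (isUnit_of_dvd_unit (Multiset.dvd_prod hx) (hz1 ▸ isUnit_one))
    simp [this]
  · obtain ⟨n, -, hsub⟩ := hsp a ha
    refine ⟨n, fun z hz => ?_⟩
    obtain ⟨l, hl, hirr, hassoc⟩ := zfac_elems_lift hz
    rw [← hl, Multiset.card_map]
    exact bounded_decomp hsub (fun x hx => (hirr x hx).not_isUnit) hassoc

lemma fdist_eq [inst : DecidableEq (Associates M)] (z z' : Multiset (Associates M)) :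
    fdist z z' = max (Multiset.card (z - z')) (Multiset.card (z' - z)) := by
  have h : Classical.decEq (Associates M) = inst := by
    funext a b; exact Subsingleton.elim _ _
  unfold fdist
  rw [h]

lemma fdist_comm (z z' : Multiset (Associates M)) : fdist z z' = fdist z' z := by
  classical
  rw [fdist_eq, fdist_eq]
  exact max_comm _ _

lemma fdist_le_max_card (z z' : Multiset (Associates M)) :
    fdist z z' ≤ max (Multiset.card z) (Multiset.card z') := by
  classical
  rw [fdist_eq]
  exact max_le_max (Multiset.card_le_card tsub_le_self) (Multiset.card_le_card tsub_le_self)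

lemma card_le_card_add_fdist (z z' : Multiset (Associates M)) :
    Multiset.card z ≤ Multiset.card z' + fdist z z' := by
  classical
  rw [fdist_eq]
  have h1 : z ≤ z - z' + z' := le_tsub_add
  calc Multiset.card z ≤ Multiset.card (z - z' + z') := Multiset.card_le_card h1
    _ = Multiset.card (z - z') + Multiset.card z' := by rw [Multiset.card_add]
    _ ≤ Multiset.card z' + max (Multiset.card (z - z')) (Multiset.card (z' - z)) := by
        have := le_max_left (Multiset.card (z - z')) (Multiset.card (z' - z))
        omega

lemma fdist_cons (u : Associates M) (z z' : Multiset (Associates M)) :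
    fdist (u ::ₘ z) (u ::ₘ z') = fdist z z' := by
  classical
  rw [fdist_eq, fdist_eq]
  rw [← Multiset.singleton_add u z, ← Multiset.singleton_add u z',
    add_tsub_add_eq_tsub_left, add_tsub_add_eq_tsub_left]

lemma fdist_sub_add [DecidableEq (Associates M)] {z s y : Multiset (Associates M)} (hs : s ≤ z) :
    fdist z (z - s + y) ≤ max (Multiset.card s) (Multiset.card y) := by
  rw [fdist_eq]
  refine max_le_max (Multiset.card_le_card ?_) (Multiset.card_le_card ?_)
  · rw [tsub_le_iff_right]
    calc z = z - s + s := (tsub_add_cancel_of_le hs).symm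
      _ ≤ (z - s + y) + s := add_le_add_left (Multiset.le_add_right _ _) s
      _ = s + (z - s + y) := add_comm _ _
  · rw [tsub_le_iff_right]
    calc z - s + y = y + (z - s) := add_comm _ _
      _ ≤ y + z := add_le_add_right (tsub_le_self) y

def FChain (N : ℕ) (a : M) (z z' : Multiset (Associates M)) : Prop :=
  ∃ (k : ℕ) (c : Fin (k + 1) → Multiset (Associates M)),
    c 0 = z ∧ c (Fin.last k) = z' ∧ (∀ i, c i ∈ Zfac a) ∧
    ∀ i : Fin k, fdist (c i.castSucc) (c i.succ) ≤ N

lemma chain_refl {N : ℕ} {a : M} {z : Multiset (Associates M)} (hz : z ∈ Zfac a) :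
    FChain N a z z := by
  refine ⟨0, fun _ => z, rfl, rfl, fun _ => hz, fun i => i.elim0⟩

lemma chain_single {N : ℕ} {a : M} {z z' : Multiset (Associates M)} (hz : z ∈ Zfac a)
    (hz' : z' ∈ Zfac a) (h : fdist z z' ≤ N) : FChain N a z z' := by
  refine ⟨1, fun i => if (i : ℕ) = 0 then z else z', rfl, rfl, ?_, ?_⟩
  · intro i
    by_cases hi : (i : ℕ) = 0 <;> simp [hi, hz, hz']
  · intro i
    have : (i : ℕ) = 0 := by omega
    simp [Fin.castSucc, Fin.succ, this, h]

lemma chain_symm {N : ℕ} {a : M} {z z' : Multiset (Associates M)}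
    (h : FChain N a z z') : FChain N a z' z := by
  obtain ⟨k, c, h0, hl, hmem, hstep⟩ := h
  refine ⟨k, fun i => c i.rev, ?_, ?_, fun i => hmem _, ?_⟩
  · show c (Fin.rev 0) = z'
    rw [Fin.rev_zero]; exact hl
  · show c (Fin.last k).rev = z
    rw [Fin.rev_last]; exact h0
  · intro i
    show fdist (c i.castSucc.rev) (c i.succ.rev) ≤ N
    have e1 : (i.castSucc).rev = (i.rev).succ := Fin.rev_castSucc i
    have e2 : (i.succ).rev = (i.rev).castSucc := by
      rw [← Fin.rev_rev i.rev.castSucc, Fin.rev_castSucc, Fin.rev_rev]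
    rw [e1, e2, fdist_comm]
    exact hstep i.rev

lemma chain_trans {N : ℕ} {a : M} {z z' z'' : Multiset (Associates M)}
    (h : FChain N a z z') (h' : FChain N a z' z'') : FChain N a z z'' := by
  obtain ⟨k, c, h0, hl, hmem, hstep⟩ := h
  obtain ⟨k', c', h0', hl', hmem', hstep'⟩ := h'
  refine ⟨k + k', fun i => if hh : (i : ℕ) ≤ k then c ⟨i, by omega⟩ else c' ⟨(i : ℕ) - k, by omega⟩,
    ?_, ?_, ?_, ?_⟩ <;> beta_reduce
  · simp only [Fin.val_zero, Nat.zero_le, dif_pos]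
    show c ⟨0, by omega⟩ = z
    exact h0
  · by_cases hk' : k' = 0
    · subst hk'
      simp only [Fin.val_last, Nat.add_zero, le_refl, dif_pos]
      rw [show (⟨k, by omega⟩ : Fin (k+1)) = Fin.last k from rfl, hl]
      rw [← h0', show (0 : Fin 1) = Fin.last 0 from rfl, hl']
    · have : ¬ ((Fin.last (k + k') : ℕ) ≤ k) := by simp only [Fin.val_last]; omega
      rw [dif_neg this]
      have : (⟨(Fin.last (k + k') : ℕ) - k, by simp only [Fin.val_last]; omega⟩ : Fin (k'+1)) = Fin.last k' := by
        apply Fin.ext; simp only [Fin.val_last]; omega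
      rw [this, hl']
  · intro i
    beta_reduce
    by_cases hh : (i : ℕ) ≤ k
    · rw [dif_pos hh]; exact hmem _
    · rw [dif_neg hh]; exact hmem' _
  · intro i
    have hic : ((i.castSucc : Fin (k+k'+1)) : ℕ) = (i : ℕ) := rfl
    have his : ((i.succ : Fin (k+k'+1)) : ℕ) = (i : ℕ) + 1 := rfl
    by_cases h1 : (i : ℕ) + 1 ≤ k
    · rw [dif_pos (by omega : ((i.castSucc : Fin (k+k'+1)) : ℕ) ≤ k),
        dif_pos (by rw [his]; omega)]
      have e1 : (⟨((i.castSucc : Fin (k+k'+1)) : ℕ), by omega⟩ : Fin (k+1)) =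
          (⟨(i : ℕ), by omega⟩ : Fin k).castSucc := rfl
      have e2 : (⟨((i.succ : Fin (k+k'+1)) : ℕ), by omega⟩ : Fin (k+1)) =
          (⟨(i : ℕ), by omega⟩ : Fin k).succ := rfl
      rw [e1, e2]
      exact hstep _
    · by_cases h2 : (i : ℕ) ≤ k
      · -- boundary : i = k
        have hik : (i : ℕ) = k := by omega
        have hk' : 0 < k' := by have := i.isLt; omega
        rw [dif_pos (by omega : ((i.castSucc : Fin (k+k'+1)) : ℕ) ≤ k),
          dif_neg (by rw [his]; omega)]
        have e1 : (⟨((i.castSucc : Fin (k+k'+1)) : ℕ), by omega⟩ : Fin (k+1)) = Fin.last k := by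
          apply Fin.ext; simp [Fin.last, hic, hik]
        have e2 : (⟨((i.succ : Fin (k+k'+1)) : ℕ) - k, by omega⟩ : Fin (k'+1)) =
            (⟨0, hk'⟩ : Fin k').succ := by
          apply Fin.ext; simp [Fin.succ, his, hik]
        rw [e1, e2, hl, ← h0']
        have e3 : (0 : Fin (k'+1)) = (⟨0, hk'⟩ : Fin k').castSucc := rfl
        rw [e3]
        exact hstep' _
      · rw [dif_neg (by omega : ¬ ((i.castSucc : Fin (k+k'+1)) : ℕ) ≤ k),
          dif_neg (by rw [his]; omega)]
        have hlt : (i : ℕ) - k < k' := by have := i.isLt; omega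
        have e1 : (⟨((i.castSucc : Fin (k+k'+1)) : ℕ) - k, by omega⟩ : Fin (k'+1)) =
            (⟨(i : ℕ) - k, hlt⟩ : Fin k').castSucc := by
          apply Fin.ext; simp [Fin.castSucc, Fin.castAdd, Fin.castLE, hic]
        have e2 : (⟨((i.succ : Fin (k+k'+1)) : ℕ) - k, by omega⟩ : Fin (k'+1)) =
            (⟨(i : ℕ) - k, hlt⟩ : Fin k').succ := by
          apply Fin.ext; simp [Fin.succ, his]; omega
        rw [e1, e2]
        exact hstep' _

lemma chain_cons {N : ℕ} {a c₀ : M} {v : Associates M} (hv : Irreducible v)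
    (hmul : v * Associates.mk c₀ = Associates.mk a) {w w' : Multiset (Associates M)}
    (h : FChain N c₀ w w') : FChain N a (v ::ₘ w) (v ::ₘ w') := by
  obtain ⟨k, c, h0, hl, hmem, hstep⟩ := h
  refine ⟨k, fun i => v ::ₘ c i, by beta_reduce; rw [h0], by beta_reduce; rw [hl], ?_, ?_⟩
  · intro i
    show (v ::ₘ c i) ∈ Zfac a
    obtain ⟨hi1, hi2⟩ := hmem i
    refine ⟨?_, ?_⟩
    · intro u hu
      rcases Multiset.mem_cons.mp hu with rfl | hu
      · exact hv
      · exact hi1 u hu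
    · rw [Multiset.prod_cons, hi2, hmul]
  · intro i
    show fdist (v ::ₘ c i.castSucc) (v ::ₘ c i.succ) ≤ N
    rw [fdist_cons]
    exact hstep i

lemma part1_aux {Λ : ℕ}
    (hΛ : ∀ a : M, (Zfac a).Nonempty → ∃ z ∈ Zfac a, Multiset.card z ≤ Λ) :
    ∀ n : ℕ, ∀ a : M, ∀ z ∈ Zfac a, Multiset.card z ≤ n →
      ∀ z₀ ∈ Zfac a, Multiset.card z₀ ≤ Λ → FChain (1 + Λ) a z z₀ := by
  classical
  intro n
  induction n with
  | zero =>
    intro a z hz hcz z₀ hz₀ hc₀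
    refine chain_single hz hz₀ ?_
    calc fdist z z₀ ≤ max (Multiset.card z) (Multiset.card z₀) := fdist_le_max_card z z₀
      _ ≤ 1 + Λ := by omega
  | succ m ih =>
    intro a z hz hcz z₀ hz₀ hc₀
    by_cases hsmall : Multiset.card z ≤ Λ + 1
    · refine chain_single hz hz₀ ?_
      calc fdist z z₀ ≤ max (Multiset.card z) (Multiset.card z₀) := fdist_le_max_card z z₀
        _ ≤ 1 + Λ := by omega
    · push_neg at hsmall
      obtain ⟨s, hs, hcs⟩ := exists_le_card (show Λ + 1 ≤ Multiset.card z by omega)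
      obtain ⟨b, hb⟩ := Associates.mk_surjective s.prod
      have hsb : s ∈ Zfac b := ⟨fun x hx => hz.1 x (Multiset.mem_of_le hs hx), hb.symm⟩
      obtain ⟨y, hy, hcy⟩ := hΛ b ⟨s, hsb⟩
      set z₂ := z - s + y with hz₂def
      have hz₂ : z₂ ∈ Zfac a := by
        constructor
        · intro x hx
          rcases Multiset.mem_add.mp hx with hx | hx
          · exact hz.1 x (Multiset.mem_of_le (Multiset.sub_le_self z s) hx)
          · exact hy.1 x hx
        · rw [Multiset.prod_add, hy.2, hb, ← Multiset.prod_add, tsub_add_cancel_of_le hs]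
          exact hz.2
      have hcard₂ : Multiset.card z₂ ≤ m := by
        have h1 : Multiset.card z₂ = Multiset.card z - (Λ + 1) + Multiset.card y := by
          rw [hz₂def, Multiset.card_add, Multiset.card_sub hs, hcs]
        omega
      refine chain_trans (chain_single hz hz₂ ?_) (ih a z₂ hz₂ hcard₂ z₀ hz₀ hc₀)
      calc fdist z z₂ ≤ max (Multiset.card s) (Multiset.card y) := fdist_sub_add hs
        _ ≤ 1 + Λ := by omega

lemma part1 {Λ : ℕ}
    (hΛ : ∀ a : M, (Zfac a).Nonempty → ∃ z ∈ Zfac a, Multiset.card z ≤ Λ) :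
    ∀ a : M, ∀ z ∈ Zfac a, ∀ z' ∈ Zfac a, FChain (1 + Λ) a z z' := by
  intro a z hz z' hz'
  obtain ⟨z₀, hz₀, hc₀⟩ := hΛ a ⟨z, hz⟩
  exact chain_trans (part1_aux hΛ (Multiset.card z) a z hz le_rfl z₀ hz₀ hc₀)
    (chain_symm (part1_aux hΛ (Multiset.card z') a z' hz' le_rfl z₀ hz₀ hc₀))

lemma part2_aux
    (hsp : ∀ a : M, ¬IsUnit a → ∃ n : ℕ, 0 < n ∧
      {b : M | ¬IsUnit b} ^ n ⊆ {c : M | a ∣ c})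
    {u : M} (hu : Irreducible u) {mu tu : ℕ}
    (hmu : IsLeast {n : ℕ | 0 < n ∧ {b : M | ¬IsUnit b} ^ n ⊆ {c : M | u ∣ c}} mu)
    (ht : TameBound (Associates.mk u) tu) :
    ∀ n : ℕ, ∀ a : M, (∀ z ∈ Zfac a, Multiset.card z ≤ n) →
      ∀ z ∈ Zfac a, ∀ z' ∈ Zfac a, FChain (max (mu - 1) tu) a z z' := by
  classical
  intro n
  induction n using Nat.strong_induction_on with
  | _ n ih =>
  intro a hb z hz z' hz'
  have hmu1 : 0 < mu := hmu.1.1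
  -- key: the asymmetric case where `z` is long
  have key : ∀ z ∈ Zfac a, ∀ z' ∈ Zfac a, mu ≤ Multiset.card z →
      FChain (max (mu - 1) tu) a z z' := by
    intro z hz z' hz' hcard
    -- u divides a
    obtain ⟨l, hl, hlirr, hlassoc⟩ := zfac_elems_lift hz
    have hcl : mu ≤ Multiset.card l := by
      rw [← Multiset.card_map Associates.mk l, hl]; exact hcard
    obtain ⟨s, hsle, hcs⟩ := exists_le_card hcl
    have hus : u ∣ s.prod := by
      refine hmu.1.2 ?_
      rw [← hcs]
      exact prod_mem_pow (fun x hx => (hlirr x (Multiset.mem_of_le hsle hx)).not_isUnit)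
    have hua : u ∣ a := dvd_trans (dvd_trans hus (Multiset.prod_dvd_prod_of_le hsle)) hlassoc.dvd
    obtain ⟨c, hc⟩ := hua
    -- a factorization of a containing (mk u)
    have hzbar : ∃ zb ∈ Zfac a, Associates.mk u ∈ zb := by
      by_cases hcunit : IsUnit c
      · refine ⟨{Associates.mk u}, ⟨?_, ?_⟩, Multiset.mem_singleton_self _⟩
        · intro x hx; rw [Multiset.mem_singleton.mp hx]; exact irr_mk.mpr hu
        · rw [Multiset.prod_singleton, hc, ← Associates.mk_mul_mk,
            Associates.mk_eq_one.mpr hcunit, mul_one]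
      · obtain ⟨lc, hlc1, hlc2⟩ := exists_atomic_decomp hsp hcunit
        refine ⟨Associates.mk u ::ₘ lc.map Associates.mk, ⟨?_, ?_⟩, Multiset.mem_cons_self _ _⟩
        · intro x hx
          rcases Multiset.mem_cons.mp hx with rfl | hx
          · exact irr_mk.mpr hu
          · obtain ⟨w, hw, rfl⟩ := Multiset.mem_map.mp hx
            exact irr_mk.mpr (hlc1 w hw)
        · rw [Multiset.prod_cons, mk_prod, hlc2, Associates.mk_mul_mk, ← hc]
    -- tame steps
    obtain ⟨z₁, hz₁, humem₁, hd₁⟩ := ht a hzbar z hz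
    obtain ⟨z₁', hz₁', humem₁', hd₁'⟩ := ht a hzbar z' hz'
    set w := z₁.erase (Associates.mk u) with hw
    set w' := z₁'.erase (Associates.mk u) with hw'
    have hcons : Associates.mk u ::ₘ w = z₁ := Multiset.cons_erase humem₁
    have hcons' : Associates.mk u ::ₘ w' = z₁' := Multiset.cons_erase humem₁'
    obtain ⟨c₀, hc₀⟩ := Associates.mk_surjective w.prod
    have hwz : w ∈ Zfac c₀ :=
      ⟨fun x hx => hz₁.1 x (Multiset.mem_of_mem_erase hx), hc₀.symm⟩
    have hmulz : Associates.mk u * Associates.mk c₀ = Associates.mk a := by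
      rw [hc₀, ← Multiset.prod_cons, hcons, hz₁.2]
    have hwz' : w' ∈ Zfac c₀ := by
      refine ⟨fun x hx => hz₁'.1 x (Multiset.mem_of_mem_erase hx), ?_⟩
      refine assoc_cancel (Associates.mk u) ?_
      rw [hmulz, ← Multiset.prod_cons, hcons', hz₁'.2]
    have hbc₀ : ∀ y ∈ Zfac c₀, Multiset.card y ≤ n - 1 := by
      intro y hy
      have hmem : (Associates.mk u ::ₘ y) ∈ Zfac a := by
        refine ⟨?_, ?_⟩
        · intro x hx
          rcases Multiset.mem_cons.mp hx with rfl | hx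
          · exact irr_mk.mpr hu
          · exact hy.1 x hx
        · rw [Multiset.prod_cons, hy.2, hmulz]
      have := hb _ hmem
      rw [Multiset.card_cons] at this
      omega
    have hn1 : 1 ≤ n := by
      have := hb z hz
      omega
    have hch : FChain (max (mu - 1) tu) c₀ w w' :=
      ih (n - 1) (by omega) c₀ hbc₀ w hwz w' hwz'
    have hlift : FChain (max (mu - 1) tu) a z₁ z₁' := by
      rw [← hcons, ← hcons']
      exact chain_cons (irr_mk.mpr hu) hmulz hch
    refine chain_trans (chain_single hz hz₁ (le_trans hd₁ (le_max_right _ _))) ?_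
    refine chain_trans hlift ?_
    refine chain_single hz₁' hz' ?_
    rw [fdist_comm]
    exact le_trans hd₁' (le_max_right _ _)
  by_cases h1 : mu ≤ Multiset.card z
  · exact key z hz z' hz' h1
  by_cases h2 : mu ≤ Multiset.card z'
  · exact chain_symm (key z' hz' z hz h2)
  · refine chain_single hz hz' ?_
    refine le_trans (fdist_le_max_card z z') (le_trans ?_ (le_max_left (mu - 1) tu))
    omega

lemma delta_le {N : ℕ}
    (hcb : ∀ a : M, ∀ z ∈ Zfac a, ∀ z' ∈ Zfac a, FChain N a z z') :
    ∀ d ∈ DeltaSet M, d ≤ N := by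
  intro d hd
  obtain ⟨hd0, a, k, ⟨z, hz, hzk⟩, ⟨z', hz', hzk'⟩, hgap⟩ := hd
  by_contra hdN
  push_neg at hdN
  obtain ⟨m, c, h0, hl, hmem, hstep⟩ := hcb a z hz z' hz'
  have hsmall : ∀ i : Fin (m + 1), Multiset.card (c i) ≤ k := by
    intro i
    induction i using Fin.induction with
    | zero => rw [h0]; omega
    | succ i ihi =>
      have hfd : fdist (c i.castSucc) (c i.succ) ≤ N := hstep i
      have hle : Multiset.card (c i.succ) ≤ Multiset.card (c i.castSucc) + fdist (c i.succ) (c i.castSucc) :=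
        card_le_card_add_fdist _ _
      rw [fdist_comm] at hle
      have hLmem : Multiset.card (c i.succ) ∈ Lset a := ⟨c i.succ, hmem _, rfl⟩
      by_contra hcon
      push_neg at hcon
      exact hgap (Multiset.card (c i.succ)) hcon (by omega) hLmem
  have := hsmall (Fin.last m)
  rw [hl, hzk'] at this
  omega

/-- For a locally tame strongly primary monoid, the catenary degree is at most
1 + Λ(H), and at most max{M(u) − 1, t(H,u)} for every atom u; in particular the
set of distances Δ(H) is finite. -/
theorem stronglyPrimary_catenary_bounds (M : Type*) [CancelCommMonoid M]
    (hm : ∃ a : M, ¬IsUnit a)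
    (hsp : ∀ a : M, ¬IsUnit a → ∃ n : ℕ, 0 < n ∧
      {b : M | ¬IsUnit b} ^ n ⊆ {c : M | a ∣ c})
    (htame : ∀ u : Associates M, Irreducible u → ∃ N : ℕ, TameBound u N) :
    (∀ Λ : ℕ, (∀ a : M, (Zfac a).Nonempty → ∃ z ∈ Zfac a, Multiset.card z ≤ Λ) →
      CatenaryBound M (1 + Λ)) ∧
    (∀ u : M, Irreducible u → ∀ mu tu : ℕ,
      IsLeast {n : ℕ | 0 < n ∧ {b : M | ¬IsUnit b} ^ n ⊆ {c : M | u ∣ c}} mu →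
      TameBound (Associates.mk u) tu →
      CatenaryBound M (max (mu - 1) tu)) ∧
    (DeltaSet M).Finite := by
  have part2' : ∀ u : M, Irreducible u → ∀ mu tu : ℕ,
      IsLeast {n : ℕ | 0 < n ∧ {b : M | ¬IsUnit b} ^ n ⊆ {c : M | u ∣ c}} mu →
      TameBound (Associates.mk u) tu →
      ∀ a : M, ∀ z ∈ Zfac a, ∀ z' ∈ Zfac a, FChain (max (mu - 1) tu) a z z' := by
    intro u hu mu tu hmu ht a z hz z' hz'
    obtain ⟨n, hn⟩ := zfac_card_bound hsp a
    exact part2_aux hsp hu hmu ht n a hn z hz z' hz'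
  refine ⟨fun Λ hΛ => part1 hΛ, fun u hu mu tu hmu ht => part2' u hu mu tu hmu ht, ?_⟩
  -- finiteness of the delta set
  obtain ⟨a₀, ha₀⟩ := hm
  obtain ⟨l, hl1, hl2⟩ := exists_atomic_decomp hsp ha₀
  have hlne : l ≠ 0 := by
    intro h0
    rw [h0, Multiset.prod_zero] at hl2
    exact ha₀ (hl2 ▸ isUnit_one)
  obtain ⟨v, hv⟩ := Multiset.exists_mem_of_ne_zero hlne
  have hvirr : Irreducible v := hl1 v hv
  set S : Set ℕ := {n : ℕ | 0 < n ∧ {b : M | ¬IsUnit b} ^ n ⊆ {c : M | v ∣ c}} with hS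
  have hSne : S.Nonempty := by
    obtain ⟨n, hn1, hn2⟩ := hsp v hvirr.not_isUnit
    exact ⟨n, hn1, hn2⟩
  have hleast : IsLeast S (sInf S) := ⟨Nat.sInf_mem hSne, fun b hb => Nat.sInf_le hb⟩
  obtain ⟨tu, htu⟩ := htame (Associates.mk v) (irr_mk.mpr hvirr)
  have hcb := part2' v hvirr (sInf S) tu hleast htu
  refine Set.Finite.subset (Set.finite_Iic (max (sInf S - 1) tu)) ?_
  intro d hd
  exact delta_le hcb d hd
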